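/- Under the sandwich bounds a₁‖ξ‖^r ≤ V(ξ) ≤ a₂‖ξ‖^r (a₁, a₂ > 0, r > 1) and the Lyapunov inequality DV(ξ)F(t,ξ) ≤ α(t)V(ξ) + M₁V(ξ)^q for all t ≥ 0, ξ ≠ 0, with M₁ > 0, q < 1, and ∫_{t₁}^{t₂} α ≤ M₂ for all 0 ≤ t₁ ≤ t₂, every solution satisfies ‖ξ(t)‖ ≤ M̄ (1 + c̄ t)^{1/(r(1−q))} for all t ≥ 0, where M̄ = (e^{M₂}(1 + a₂‖ξ(0)‖^r)/a₁)^{1/r} and c̄ = M₁(1−q). -/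

import Mathlib

open MeasureTheory

open Set Filter intervalIntegral


lemma gronwall_aux {s T K c : ℝ} (hsT : s ≤ T) {θ β : ℝ → ℝ}
    (hθc : ContinuousOn θ (Set.Icc s T))
    (hθ0 : ∀ u ∈ Set.Icc s T, 0 ≤ θ u)
    (hβ : IntervalIntegrable β volume s T)
    (hderiv : ∀ u ∈ Set.Ioo s T, ∃ D, HasDerivAt θ D u ∧ D ≤ β u * θ u + c)
    (hc : 0 ≤ c)
    (hKb : ∀ u ∈ Set.Icc s T, (∫ v in u..T, β v) ≤ K) :
    θ T ≤ Real.exp K * (θ s + c * (T - s)) := by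
  obtain ⟨Cθ, hCθ⟩ : ∃ C, ∀ u ∈ Icc s T, θ u ≤ C := by
    obtain ⟨C, hC⟩ := (isCompact_Icc).exists_bound_of_continuousOn hθc
    exact ⟨C, fun u hu => (le_abs_self _).trans (by simpa using hC u hu)⟩
  have hCθ0 : 0 ≤ Cθ := (hθ0 s ⟨le_rfl, hsT⟩).trans (hCθ s ⟨le_rfl, hsT⟩)
  set L : ℝ := ∫ v in s..T, |β v| with hLdef
  have hβuw : ∀ u w, u ∈ Icc s T → w ∈ Icc s T → IntervalIntegrable β volume u w := by
    intro u w hu hw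
    refine hβ.mono_set ?_
    rw [uIcc_of_le hsT]
    exact uIcc_subset_Icc hu hw
  have key : ∀ δ : ℝ, 0 < δ → δ ≤ 1 →
      θ T ≤ Real.exp (K + δ) * (θ s + c * (T - s)) + Cθ * Real.exp (2*L+2) * δ := by
    intro δ hδ hδ1
    have hβIcc : IntegrableOn β (Icc s T) volume :=
      (intervalIntegrable_iff_integrableOn_Icc_of_le hsT).mp hβ
    obtain ⟨γ, -, hγδ0, hγcont, hγint⟩ :=
      (hβIcc.integrable_indicator measurableSet_Icc).exists_hasCompactSupport_integral_sub_le hδ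
    have hγiv : ∀ a b : ℝ, IntervalIntegrable γ volume a b := fun a b =>
      hγcont.intervalIntegrable a b
    -- closeness on subintervals
    have hclose : ∀ u w, u ∈ Icc s T → w ∈ Icc s T → u ≤ w →
        (∫ v in u..w, |β v - γ v|) ≤ δ := by
      intro u w hu hw huw
      have hEq : EqOn (fun v => |β v - γ v|)
          (fun v => |(Icc s T).indicator β v - γ v|) (uIcc u w) := by
        intro v hv
        rw [uIcc_of_le huw] at hv
        have hvIcc : v ∈ Icc s T := ⟨hu.1.trans hv.1, hv.2.trans hw.2⟩
        simp [indicator_of_mem hvIcc]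
      rw [intervalIntegral.integral_congr hEq, intervalIntegral.integral_of_le huw]
      have hint : Integrable (fun v => |(Icc s T).indicator β v - γ v|) volume :=
        ((hβIcc.integrable_indicator measurableSet_Icc).sub hγint).abs
      refine le_trans (setIntegral_le_integral hint (ae_of_all _ fun v => abs_nonneg _)) ?_
      simpa [Real.norm_eq_abs] using hγδ0
    -- primitives
    set Γ : ℝ → ℝ := fun u => ∫ v in s..u, γ v with hΓdef
    have hΓd : ∀ u : ℝ, HasDerivAt Γ (γ u) u := fun u =>
      intervalIntegral.integral_hasDerivAt_right (hγiv s u)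
        (hγcont.stronglyMeasurableAtFilter _ _) hγcont.continuousAt
    have hΓcont : Continuous Γ := continuous_iff_continuousAt.mpr fun u => (hΓd u).continuousAt
    set E : ℝ → ℝ := fun u => Real.exp (-Γ u) with hEdef
    have hEd : ∀ u, HasDerivAt E (Real.exp (-Γ u) * (-γ u)) u := fun u => ((hΓd u).neg).exp
    have hEcont : Continuous E := Real.continuous_exp.comp hΓcont.neg
    set I : ℝ → ℝ := fun u => ∫ v in s..u, E v with hIdef
    have hId : ∀ u : ℝ, HasDerivAt I (E u) u := fun u =>
      intervalIntegral.integral_hasDerivAt_right (hEcont.intervalIntegrable s u)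
        (hEcont.stronglyMeasurableAtFilter _ _) hEcont.continuousAt
    have hIcont : Continuous I := continuous_iff_continuousAt.mpr fun u => (hId u).continuousAt
    -- bounds on Γ
    have hΓB : ∀ u ∈ Icc s T, |Γ u - (∫ v in s..u, β v)| ≤ δ := by
      intro u hu
      have h1 : Γ u - (∫ v in s..u, β v) = ∫ v in s..u, (γ v - β v) :=
        (intervalIntegral.integral_sub (hγiv s u) (hβuw s u ⟨le_rfl, hsT⟩ hu)).symm
      rw [h1]
      refine le_trans (intervalIntegral.abs_integral_le_integral_abs hu.1) ?_
      have : (∫ v in s..u, |γ v - β v|) = ∫ v in s..u, |β v - γ v| := by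
        congr 1; ext v; rw [abs_sub_comm]
      rw [this]
      exact hclose s u ⟨le_rfl, hsT⟩ hu hu.1
    have hBL : ∀ u ∈ Icc s T, |∫ v in s..u, β v| ≤ L := by
      intro u hu
      refine le_trans (intervalIntegral.abs_integral_le_integral_abs hu.1) ?_
      exact intervalIntegral.integral_mono_interval le_rfl hu.1 hu.2
        (ae_of_all _ fun v => abs_nonneg _) hβ.abs
    have hΓabs : ∀ u ∈ Icc s T, |Γ u| ≤ L + δ := by
      intro u hu
      have := hΓB u hu
      have := hBL u hu
      calc |Γ u| = |(Γ u - (∫ v in s..u, β v)) + (∫ v in s..u, β v)| := by ring_nf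
        _ ≤ |Γ u - (∫ v in s..u, β v)| + |∫ v in s..u, β v| := abs_add_le _ _
        _ ≤ δ + L := by gcongr
        _ = L + δ := by ring
    have hΓTK : ∀ u ∈ Icc s T, Γ T - Γ u ≤ K + δ := by
      intro u hu
      have h1 : Γ T - Γ u = ∫ v in u..T, γ v :=
        intervalIntegral.integral_interval_sub_left (hγiv s T) (hγiv s u)
      have h2 : (∫ v in u..T, γ v) - (∫ v in u..T, β v) = ∫ v in u..T, (γ v - β v) :=
        (intervalIntegral.integral_sub (hγiv u T) (hβuw u T hu ⟨hsT, le_rfl⟩)).symm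
      have h3 : (∫ v in u..T, (γ v - β v)) ≤ δ := by
        refine le_trans (le_abs_self _) ?_
        refine le_trans (intervalIntegral.abs_integral_le_integral_abs hu.2) ?_
        have : (∫ v in u..T, |γ v - β v|) = ∫ v in u..T, |β v - γ v| := by
          congr 1; ext v; rw [abs_sub_comm]
        rw [this]
        exact hclose u T hu ⟨hsT, le_rfl⟩ hu.2
      have h4 := hKb u hu
      rw [h1]
      linarith [h2, h3, h4]
    -- the comparison function
    set g : ℝ → ℝ := fun u => θ u * E u - c * I u with hgdef
    have hgcont : ContinuousOn g (Icc s T) :=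
      (hθc.mul hEcont.continuousOn).sub (continuous_const.mul hIcont).continuousOn
    set φ : ℝ → ℝ := fun u => |β u - γ u| * (Cθ * Real.exp (L + δ)) with hφdef
    have hφint : IntegrableOn φ (Icc s T) volume := by
      refine (intervalIntegrable_iff_integrableOn_Icc_of_le hsT).mp ?_
      exact ((hβ.sub (hγiv s T)).abs).mul_const _
    set g' : ℝ → ℝ := fun u =>
      if h : u ∈ Ioo s T then
        ((hderiv u h).choose * E u + θ u * (Real.exp (-Γ u) * (-γ u))) - c * E u
      else 0 with hg'def
    have hg'deriv : ∀ x ∈ Ioo s T, HasDerivWithinAt g (g' x) (Ioi x) x := by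
      intro x hx
      have hD := (hderiv x hx).choose_spec.1
      have : HasDerivAt g (((hderiv x hx).choose * E x + θ x * (Real.exp (-Γ x) * (-γ x)))
          - c * E x) x := (hD.mul (hEd x)).sub ((hId x).const_mul c)
      have h2 : g' x = ((hderiv x hx).choose * E x + θ x * (Real.exp (-Γ x) * (-γ x)))
          - c * E x := by simp only [hg'def, dif_pos hx]
      rw [h2]
      exact this.hasDerivWithinAt
    have hg'le : ∀ x ∈ Ioo s T, g' x ≤ φ x := by
      intro x hx
      obtain ⟨hD, hDle⟩ := (hderiv x hx).choose_spec
      have hxIcc : x ∈ Icc s T := Ioo_subset_Icc_self hx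
      have hEpos : (0:ℝ) < E x := Real.exp_pos _
      have hθx : 0 ≤ θ x := hθ0 x hxIcc
      have hEle : E x ≤ Real.exp (L + δ) :=
        Real.exp_le_exp.mpr (le_trans (neg_le_abs _) (hΓabs x hxIcc))
      simp only [hg'def, dif_pos hx]
      have step1 : (hderiv x hx).choose * E x ≤ (β x * θ x + c) * E x :=
        mul_le_mul_of_nonneg_right hDle hEpos.le
      have hEeq : Real.exp (-Γ x) = E x := rfl
      have step2 : (β x * θ x + c) * E x + θ x * (E x * (-γ x)) - c * E x
          = (β x - γ x) * (θ x * E x) := by ring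
      have step3 : (β x - γ x) * (θ x * E x) ≤ |β x - γ x| * (θ x * E x) :=
        mul_le_mul_of_nonneg_right (le_abs_self _) (mul_nonneg hθx hEpos.le)
      have step4 : θ x * E x ≤ Cθ * Real.exp (L + δ) :=
        mul_le_mul (hCθ x hxIcc) hEle hEpos.le hCθ0
      have step5 : |β x - γ x| * (θ x * E x) ≤ |β x - γ x| * (Cθ * Real.exp (L + δ)) :=
        mul_le_mul_of_nonneg_left step4 (abs_nonneg _)
      rw [hEeq]
      calc (hderiv x hx).choose * E x + θ x * (E x * (-γ x)) - c * E x
          ≤ (β x * θ x + c) * E x + θ x * (E x * (-γ x)) - c * E x := by linarith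
        _ = (β x - γ x) * (θ x * E x) := step2
        _ ≤ |β x - γ x| * (θ x * E x) := step3
        _ ≤ φ x := step5
    have hgTs : g T - g s ≤ Cθ * Real.exp (L + δ) * δ := by
      refine le_trans (intervalIntegral.sub_le_integral_of_hasDeriv_right_of_le hsT hgcont
        hg'deriv hφint hg'le) ?_
      rw [hφdef]
      rw [intervalIntegral.integral_mul_const]
      calc (∫ v in s..T, |β v - γ v|) * (Cθ * Real.exp (L + δ))
          ≤ δ * (Cθ * Real.exp (L + δ)) := by
            refine mul_le_mul_of_nonneg_right (hclose s T ⟨le_rfl, hsT⟩ ⟨hsT, le_rfl⟩ hsT) ?_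
            positivity
        _ = Cθ * Real.exp (L + δ) * δ := by ring
    have hgs : g s = θ s := by
      simp [hgdef, hEdef, hIdef, hΓdef, intervalIntegral.integral_same]
    have hmain0 : θ T * E T ≤ θ s + c * I T + Cθ * Real.exp (L + δ) * δ := by
      have : g T = θ T * E T - c * I T := rfl
      rw [hgs, this] at hgTs
      linarith
    -- multiply by exp (Γ T)
    have hET : E T * Real.exp (Γ T) = 1 := by
      rw [hEdef]; rw [← Real.exp_add]; simp
    have hmain : θ T ≤ (θ s + c * I T + Cθ * Real.exp (L + δ) * δ) * Real.exp (Γ T) := by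
      calc θ T = (θ T * E T) * Real.exp (Γ T) := by
            rw [mul_assoc, hET, mul_one]
        _ ≤ _ := mul_le_mul_of_nonneg_right hmain0 (Real.exp_nonneg _)
    have hTIcc : T ∈ Icc s T := ⟨hsT, le_rfl⟩
    have hΓTle : Γ T ≤ K + δ := by
      have := hΓTK s ⟨le_rfl, hsT⟩
      have hΓs : Γ s = 0 := intervalIntegral.integral_same
      linarith
    have termA : θ s * Real.exp (Γ T) ≤ θ s * Real.exp (K + δ) :=
      mul_le_mul_of_nonneg_left (Real.exp_le_exp.mpr hΓTle) (hθ0 s ⟨le_rfl, hsT⟩)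
    have termB : c * I T * Real.exp (Γ T) ≤ c * (T - s) * Real.exp (K + δ) := by
      have hITle : I T ≤ (T - s) * Real.exp (K + δ - Γ T) := by
        have hpt : ∀ u ∈ Icc s T, E u ≤ Real.exp (K + δ - Γ T) := by
          intro u hu
          refine Real.exp_le_exp.mpr ?_
          have := hΓTK u hu
          linarith
        have := intervalIntegral.integral_mono_on hsT (hEcont.intervalIntegrable s T)
          (intervalIntegrable_const (μ := volume) (c := Real.exp (K + δ - Γ T))) hpt
        simpa [intervalIntegral.integral_const, smul_eq_mul] using this
      have hexp : Real.exp (K + δ - Γ T) * Real.exp (Γ T) = Real.exp (K + δ) := by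
        rw [← Real.exp_add]; congr 1; ring
      calc c * I T * Real.exp (Γ T)
          ≤ c * ((T - s) * Real.exp (K + δ - Γ T)) * Real.exp (Γ T) := by
            refine mul_le_mul_of_nonneg_right (mul_le_mul_of_nonneg_left hITle hc) ?_
            positivity
        _ = c * (T - s) * (Real.exp (K + δ - Γ T) * Real.exp (Γ T)) := by ring
        _ = c * (T - s) * Real.exp (K + δ) := by rw [hexp]
    have termC : Cθ * Real.exp (L + δ) * δ * Real.exp (Γ T) ≤ Cθ * Real.exp (2*L+2) * δ := by
      have e1 : Real.exp (Γ T) ≤ Real.exp (L + δ) :=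
        Real.exp_le_exp.mpr (le_trans (le_abs_self _) (hΓabs T hTIcc))
      have e2 : Real.exp (L + δ) * Real.exp (L + δ) ≤ Real.exp (2*L+2) := by
        rw [← Real.exp_add]
        exact Real.exp_le_exp.mpr (by linarith)
      calc Cθ * Real.exp (L + δ) * δ * Real.exp (Γ T)
          ≤ Cθ * Real.exp (L + δ) * δ * Real.exp (L + δ) := by
            refine mul_le_mul_of_nonneg_left e1 ?_
            positivity
        _ = Cθ * δ * (Real.exp (L + δ) * Real.exp (L + δ)) := by ring
        _ ≤ Cθ * δ * Real.exp (2*L+2) := by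
            refine mul_le_mul_of_nonneg_left e2 ?_
            positivity
        _ = Cθ * Real.exp (2*L+2) * δ := by ring
    have hexpand : (θ s + c * I T + Cθ * Real.exp (L + δ) * δ) * Real.exp (Γ T)
        = θ s * Real.exp (Γ T) + c * I T * Real.exp (Γ T)
          + Cθ * Real.exp (L + δ) * δ * Real.exp (Γ T) := by ring
    have hfinal : Real.exp (K + δ) * (θ s + c * (T - s))
        = θ s * Real.exp (K + δ) + c * (T - s) * Real.exp (K + δ) := by ring
    rw [hexpand] at hmain
    linarith
  -- take the limit δ → 0⁺
  have hlim : Tendsto (fun δ : ℝ => Real.exp (K + δ) * (θ s + c * (T - s))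
      + Cθ * Real.exp (2*L+2) * δ) (nhdsWithin 0 (Ioi 0))
      (nhds (Real.exp K * (θ s + c * (T - s)))) := by
    have hcont : Continuous (fun δ : ℝ => Real.exp (K + δ) * (θ s + c * (T - s))
        + Cθ * Real.exp (2*L+2) * δ) := by fun_prop
    have h2 := (hcont.tendsto 0).mono_left (nhdsWithin_le_nhds (s := Ioi (0:ℝ)))
    simpa using h2
  refine ge_of_tendsto hlim ?_
  filter_upwards [Ioc_mem_nhdsGT_of_mem (⟨le_rfl, zero_lt_one⟩ : (0:ℝ) ∈ Ico 0 1)] with δ hδ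
  exact key δ hδ.1 hδ.2

theorem lyapunov_growth_M1_pos {d : ℕ}
    (F : ℝ → EuclideanSpace ℝ (Fin d) → EuclideanSpace ℝ (Fin d))
    (ξ : ℝ → EuclideanSpace ℝ (Fin d))
    (hξ : ∀ t, 0 ≤ t → HasDerivAt ξ (F t (ξ t)) t)
    (V : EuclideanSpace ℝ (Fin d) → ℝ) (hV : ContDiff ℝ 1 V)
    (a₁ a₂ r q M₁ M₂ : ℝ) (ha₁ : 0 < a₁) (ha₂ : 0 < a₂) (hr : 1 < r)
    (hq : q < 1) (hM₁ : 0 < M₁) (hM₂ : 0 < M₂)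
    (hsand : ∀ x, a₁ * ‖x‖ ^ r ≤ V x ∧ V x ≤ a₂ * ‖x‖ ^ r)
    (α : ℝ → ℝ) (hα : ∀ t, IntervalIntegrable α volume 0 t)
    (hαbound : ∀ t₁ t₂, 0 ≤ t₁ → t₁ ≤ t₂ → (∫ s in t₁..t₂, α s) ≤ M₂)
    (hLyap : ∀ t, 0 ≤ t → ∀ x, x ≠ 0 →
      fderiv ℝ V x (F t x) ≤ α t * V x + M₁ * (V x) ^ q) :
    ∀ t, 0 ≤ t →
      ‖ξ t‖ ≤ (Real.exp M₂ * (1 + a₂ * ‖ξ 0‖ ^ r) / a₁) ^ (1 / r) *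
        (1 + M₁ * (1 - q) * t) ^ (1 / (r * (1 - q))) := by
  intro t hT
  have hp : (0:ℝ) < 1 - q := by linarith
  have hr0 : (0:ℝ) < r := by linarith
  have hVd : Differentiable ℝ V := hV.differentiable one_ne_zero
  set W : ℝ → ℝ := fun u => V (ξ u) with hWdef
  have hWnn : ∀ u, 0 ≤ W u := fun u =>
    le_trans (mul_nonneg ha₁.le (Real.rpow_nonneg (norm_nonneg _) _)) ((hsand (ξ u)).1)
  have hV0 : V 0 = 0 := by
    have h1 := (hsand 0).1
    have h2 := (hsand 0).2
    rw [norm_zero, Real.zero_rpow (ne_of_gt hr0), mul_zero] at h1 h2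
    linarith
  have hWc : ∀ u, 0 ≤ u → ContinuousAt W u := fun u hu =>
    (hVd.continuous.continuousAt).comp (hξ u hu).continuousAt
  have hWd : ∀ u, 0 ≤ u → HasDerivAt W (fderiv ℝ V (ξ u) (F u (ξ u))) u := fun u hu =>
    (hVd (ξ u)).hasFDerivAt.comp_hasDerivAt u (hξ u hu)
  have h1T : (0:ℝ) ≤ 1 + M₁ * (1 - q) * t :=
    add_nonneg zero_le_one (mul_nonneg (mul_nonneg hM₁.le hp.le) hT)
  set P : ℝ := 1 + a₂ * ‖ξ 0‖ ^ r with hPdef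
  have hP1 : (1:ℝ) ≤ P :=
    le_add_of_nonneg_right (mul_nonneg ha₂.le (Real.rpow_nonneg (norm_nonneg _) _))
  have hPpos : (0:ℝ) < P := lt_of_lt_of_le one_pos hP1
  by_cases hWT : W t ≤ 0
  · have h4 : ‖ξ t‖ ^ r = 0 := by
      have h1 := (hsand (ξ t)).1
      have h3 : ‖ξ t‖ ^ r ≤ 0 := by nlinarith
      exact le_antisymm h3 (Real.rpow_nonneg (norm_nonneg _) r)
    have hnorm : ‖ξ t‖ = 0 :=
      ((Real.rpow_eq_zero_iff_of_nonneg (norm_nonneg (ξ t))).mp h4).1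
    rw [hnorm]
    apply mul_nonneg (Real.rpow_nonneg ?_ _) (Real.rpow_nonneg h1T _)
    exact div_nonneg (mul_nonneg (Real.exp_nonneg _) hPpos.le) ha₁.le
  · have hWTpos : 0 < W t := lt_of_le_of_ne (hWnn t) (fun h => hWT (le_of_eq h.symm))
    set Z : Set ℝ := (Icc 0 t ∩ W ⁻¹' {0}) ∪ {0} with hZdef
    have hWconT : ContinuousOn W (Icc 0 t) := fun u hu => ((hWc u hu.1).continuousWithinAt)
    have hZcomp : IsCompact Z := by
      refine IsCompact.union ?_ isCompact_singleton
      refine isCompact_Icc.of_isClosed_subset ?_ inter_subset_left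
      exact hWconT.preimage_isClosed_of_isClosed isClosed_Icc isClosed_singleton
    have hZne : Z.Nonempty := ⟨0, Or.inr rfl⟩
    set σ := sSup Z with hσdef
    have hσZ : σ ∈ Z := hZcomp.sSup_mem hZne
    have hσ0 : 0 ≤ σ := by
      rcases hσZ with h | h
      · exact h.1.1
      · rw [mem_singleton_iff] at h; exact le_of_eq h.symm
    have hσT : σ ≤ t := by
      rcases hσZ with h | h
      · exact h.1.2
      · rw [mem_singleton_iff] at h; rw [h]; exact hT
    have hbdd : BddAbove Z := hZcomp.bddAbove
    have hWpos : ∀ u, σ < u → u ≤ t → 0 < W u := by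
      intro u h1 h2
      rcases (hWnn u).lt_or_eq with h | h
      · exact h
      · exfalso
        have hu : u ∈ Z := Or.inl ⟨⟨le_trans hσ0 h1.le, h2⟩, by simp [← h]⟩
        have := le_csSup hbdd hu
        linarith
    -- hypotheses for gronwall_aux
    have hθc : ContinuousOn (fun u => W u ^ (1-q)) (Set.Icc σ t) :=
      (hWconT.mono (Icc_subset_Icc hσ0 le_rfl)).rpow_const (fun x _ => Or.inr hp.le)
    have hθ0 : ∀ u ∈ Set.Icc σ t, 0 ≤ W u ^ (1-q) := fun u _ => Real.rpow_nonneg (hWnn u) _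
    have hβ : IntervalIntegrable (fun u => (1-q) * α u) volume σ t := by
      refine IntervalIntegrable.const_mul ?_ _
      refine (hα t).mono_set ?_
      rw [uIcc_of_le hσT, uIcc_of_le hT]
      exact Icc_subset_Icc hσ0 le_rfl
    have hderiv : ∀ u ∈ Set.Ioo σ t, ∃ D, HasDerivAt (fun u => W u ^ (1-q)) D u ∧
        D ≤ (1-q) * α u * (W u ^ (1-q)) + (1-q) * M₁ := by
      intro u hu
      have hu0 : 0 ≤ u := le_trans hσ0 hu.1.le
      have hWu : 0 < W u := hWpos u hu.1 hu.2.le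
      have hξne : ξ u ≠ 0 := by
        intro h
        have : W u = 0 := by rw [hWdef]; simp only; rw [h, hV0]
        linarith
      have hD := hWd u hu0
      have hθD := hD.rpow_const (p := 1-q) (Or.inl hWu.ne')
      refine ⟨_, hθD, ?_⟩
      have hLy : fderiv ℝ V (ξ u) (F u (ξ u)) ≤ α u * W u + M₁ * W u ^ q :=
        hLyap u hu0 (ξ u) hξne
      have hpow_pos : 0 < W u ^ ((1-q)-1) := Real.rpow_pos_of_pos hWu _
      have key1 : W u ^ ((1-q)-1) * W u = W u ^ (1-q) := by
        nth_rewrite 2 [← Real.rpow_one (W u)]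
        rw [← Real.rpow_add hWu]
        congr 1
        ring
      have key2 : W u ^ ((1-q)-1) * W u ^ q = 1 := by
        rw [← Real.rpow_add hWu]
        norm_num
      calc fderiv ℝ V (ξ u) (F u (ξ u)) * (1-q) * W u ^ ((1-q)-1)
          ≤ (α u * W u + M₁ * W u ^ q) * (1-q) * W u ^ ((1-q)-1) :=
            mul_le_mul_of_nonneg_right (mul_le_mul_of_nonneg_right hLy hp.le) hpow_pos.le
        _ = (1-q) * α u * (W u ^ ((1-q)-1) * W u)
            + (1-q) * M₁ * (W u ^ ((1-q)-1) * W u ^ q) := by ring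
        _ = (1-q) * α u * (W u ^ (1-q)) + (1-q) * M₁ := by rw [key1, key2, mul_one]
    have hKb : ∀ u ∈ Set.Icc σ t, (∫ v in u..t, (1-q) * α v) ≤ (1-q) * M₂ := by
      intro u hu
      rw [intervalIntegral.integral_const_mul]
      exact mul_le_mul_of_nonneg_left (hαbound u t (le_trans hσ0 hu.1) hu.2) hp.le
    have hgron := gronwall_aux hσT hθc hθ0 hβ hderiv (mul_nonneg hp.le hM₁.le) hKb
    -- hgron : W t ^ (1-q) ≤ exp ((1-q)*M₂) * (W σ ^ (1-q) + (1-q)*M₁*(t - σ))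
    have hθσ : W σ ^ (1-q) ≤ P ^ (1-q) := by
      rcases hσZ with h | h
      · have hz : W σ = 0 := h.2
        rw [hz, Real.zero_rpow hp.ne']
        exact Real.rpow_nonneg hPpos.le _
      · rw [mem_singleton_iff] at h
        rw [h]
        refine Real.rpow_le_rpow (hWnn 0) ?_ hp.le
        calc W 0 ≤ a₂ * ‖ξ 0‖ ^ r := (hsand (ξ 0)).2
          _ ≤ P := le_add_of_nonneg_left zero_le_one
    have hstep : W t ^ (1-q) ≤ Real.exp ((1-q)*M₂) * (P ^ (1-q) * (1 + M₁ * (1-q) * t)) := by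
      have h1 : (1:ℝ) ≤ P ^ (1-q) := Real.one_le_rpow hP1 hp.le
      have h2 : (1-q) * M₁ * (t - σ) ≤ M₁ * (1-q) * t := by nlinarith [mul_nonneg (mul_nonneg hM₁.le hp.le) hσ0]
      have h0 : 0 ≤ M₁ * (1-q) * t := mul_nonneg (mul_nonneg hM₁.le hp.le) hT
      have h3 : P ^ (1-q) + M₁ * (1-q) * t ≤ P ^ (1-q) * (1 + M₁ * (1-q) * t) := by nlinarith
      refine le_trans hgron ?_
      apply mul_le_mul_of_nonneg_left _ (Real.exp_nonneg _)
      linarith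
    have hWT' : W t ≤ Real.exp M₂ * P * (1 + M₁ * (1-q) * t) ^ (1/(1-q)) := by
      have hmono := Real.rpow_le_rpow (Real.rpow_nonneg (hWnn t) _) hstep
        (one_div_nonneg.mpr hp.le)
      have hWTid : (W t ^ (1-q)) ^ (1/(1-q)) = W t := by
        rw [← Real.rpow_mul (hWnn t), mul_one_div, div_self hp.ne', Real.rpow_one]
      rw [hWTid] at hmono
      refine le_trans hmono (le_of_eq ?_)
      rw [Real.mul_rpow (Real.exp_nonneg _)
        (mul_nonneg (Real.rpow_nonneg hPpos.le _) h1T),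
        Real.mul_rpow (Real.rpow_nonneg hPpos.le _) h1T]
      have e1 : Real.exp ((1-q)*M₂) ^ (1/(1-q)) = Real.exp M₂ := by
        rw [← Real.exp_mul]
        congr 1
        field_simp
      have e2 : (P ^ (1-q)) ^ (1/(1-q)) = P := by
        rw [← Real.rpow_mul hPpos.le, mul_one_div, div_self hp.ne', Real.rpow_one]
      rw [e1, e2]
      ring
    have hfin1 : a₁ * ‖ξ t‖ ^ r ≤ Real.exp M₂ * P * (1 + M₁ * (1-q) * t) ^ (1/(1-q)) :=
      le_trans (hsand (ξ t)).1 hWT'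
    have hfin2 : ‖ξ t‖ ^ r ≤ Real.exp M₂ * P * (1 + M₁ * (1-q) * t) ^ (1/(1-q)) / a₁ :=
      (le_div_iff₀' ha₁).mpr hfin1
    have hnormid : ‖ξ t‖ = (‖ξ t‖ ^ r) ^ (1/r) := by
      rw [← Real.rpow_mul (norm_nonneg _), mul_one_div, div_self (ne_of_gt hr0), Real.rpow_one]
    rw [hnormid]
    refine le_trans (Real.rpow_le_rpow (Real.rpow_nonneg (norm_nonneg _) _) hfin2
      (one_div_nonneg.mpr hr0.le)) (le_of_eq ?_)
    have hre : Real.exp M₂ * P * (1 + M₁ * (1-q) * t) ^ (1/(1-q)) / a₁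
        = (Real.exp M₂ * P / a₁) * (1 + M₁ * (1-q) * t) ^ (1/(1-q)) := by ring
    rw [hre, Real.mul_rpow (div_nonneg (mul_nonneg (Real.exp_nonneg _) hPpos.le) ha₁.le)
      (Real.rpow_nonneg h1T _), ← Real.rpow_mul h1T]
    congr 1
    rw [div_mul_div_comm, one_mul, mul_comm (1-q) r]
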